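/- Let G be a group and let g, h ∈ G with h of infinite order. Suppose k, l, m, n are positive integers such that h·g^k·h⁻¹ = g^l and g·h^m·g⁻¹ = h^n. Then m = n (and consequently g·h^m·g⁻¹ = h^m, i.e., g commutes with h^m). -/
import Mathlib

theorem eq_of_conj_pow (G : Type*) [Group G] (g h : G) (hh : ¬ IsOfFinOrder h)
    (k l m n : ℕ) (hk : 0 < k) (hl : 0 < l) (hm : 0 < m) (hn : 0 < n)
    (h1 : h * g ^ k * h⁻¹ = g ^ l) (h2 : g * h ^ m * g⁻¹ = h ^ n) :
    m = n ∧ g * h ^ m * g⁻¹ = h ^ m := by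
  have hinj : Function.Injective (fun a : ℕ => h ^ a) :=
    injective_pow_iff_not_isOfFinOrder.mpr hh
  have key : ∀ j a : ℕ, g ^ j * h ^ (m ^ j * a) * (g ^ j)⁻¹ = h ^ (n ^ j * a) := by
    intro j
    induction j with
    | zero => intro a; simp
    | succ j ih =>
      intro a
      have hexp : m ^ (j+1) * a = m ^ j * (m * a) := by ring
      rw [hexp, pow_succ' g, mul_inv_rev]
      have step : g * g ^ j * h ^ (m ^ j * (m * a)) * ((g ^ j)⁻¹ * g⁻¹)
          = g * (g ^ j * h ^ (m ^ j * (m * a)) * (g ^ j)⁻¹) * g⁻¹ := by group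
      rw [step, ih (m * a)]
      calc g * h ^ (n ^ j * (m * a)) * g⁻¹
          = g * (h ^ m) ^ (n ^ j * a) * g⁻¹ := by rw [← pow_mul]; ring_nf
        _ = (g * h ^ m * g⁻¹) ^ (n ^ j * a) := conj_pow.symm
        _ = h ^ (n ^ (j+1) * a) := by rw [h2, ← pow_mul]; ring_nf
  have hmn : m = n := by
    by_cases hkl : k = l
    · -- g^k commutes with h
      subst hkl
      have hc : Commute h (g ^ k) := by
        have := h1
        rwa [mul_inv_eq_iff_eq_mul] at this
      have hc2 : Commute (g ^ k) (h ^ (m ^ k)) := hc.symm.pow_right _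
      have e1 : g ^ k * h ^ (m ^ k) * (g ^ k)⁻¹ = h ^ (n ^ k) := by
        simpa using key k 1
      rw [hc2.eq, mul_assoc, mul_inv_cancel, mul_one] at e1
      exact Nat.pow_left_injective hk.ne' (hinj e1)
    · have hX : g ^ k * h ^ (m ^ l) * (g ^ k)⁻¹ = h ^ (n ^ l) := by
        have e1 : g ^ l * h ^ (m ^ l) * (g ^ l)⁻¹ = h ^ (n ^ l) := by
          simpa using key l 1
        rw [← h1] at e1
        have e2 : h * (g ^ k * h ^ (m ^ l) * (g ^ k)⁻¹) * h⁻¹ = h ^ (n ^ l) := by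
          rw [← e1]
          have : h⁻¹ * h ^ (m ^ l) * h = h ^ (m ^ l) := by
            rw [mul_assoc, ← pow_succ, pow_succ', inv_mul_cancel_left]
          group
        have e3 := congrArg (fun x => h⁻¹ * x * h) e2
        simp only [mul_assoc] at e3
        rw [inv_mul_cancel_left] at e3
        rw [show h⁻¹ * (h ^ (n ^ l) * h) = h ^ (n ^ l) by
          rw [← pow_succ, pow_succ', inv_mul_cancel_left]] at e3
        simpa [mul_assoc] using e3
      have e2 : (g ^ k * h ^ (m ^ l) * (g ^ k)⁻¹) ^ (m ^ k) = h ^ (n ^ k * m ^ l) := by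
        rw [conj_pow, ← pow_mul, show m ^ l * m ^ k = m ^ k * m ^ l from mul_comm _ _]
        exact key k (m ^ l)
      rw [hX, ← pow_mul] at e2
      have heq : n ^ l * m ^ k = n ^ k * m ^ l := hinj e2
      rcases Nat.lt_or_ge k l with hlt | hge
      · obtain ⟨d, rfl⟩ : ∃ d, l = k + d := ⟨l - k, by omega⟩
        have hd : d ≠ 0 := by omega
        have h3 : n ^ d * (n ^ k * m ^ k) = m ^ d * (n ^ k * m ^ k) := by
          calc n ^ d * (n ^ k * m ^ k) = n ^ (k + d) * m ^ k := by ring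
            _ = n ^ k * m ^ (k + d) := heq
            _ = m ^ d * (n ^ k * m ^ k) := by ring
        have h4 := Nat.eq_of_mul_eq_mul_right
          (Nat.mul_pos (pow_pos hn k) (pow_pos hm k)) h3
        exact (Nat.pow_left_injective hd h4).symm
      · have hlt : l < k := lt_of_le_of_ne hge (fun e => hkl e.symm)
        obtain ⟨d, rfl⟩ : ∃ d, k = l + d := ⟨k - l, by omega⟩
        have hd : d ≠ 0 := by omega
        have h3 : m ^ d * (n ^ l * m ^ l) = n ^ d * (n ^ l * m ^ l) := by
          calc m ^ d * (n ^ l * m ^ l) = n ^ l * m ^ (l + d) := by ring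
            _ = n ^ (l + d) * m ^ l := heq
            _ = n ^ d * (n ^ l * m ^ l) := by ring
        have h4 := Nat.eq_of_mul_eq_mul_right
          (Nat.mul_pos (pow_pos hn l) (pow_pos hm l)) h3
        exact Nat.pow_left_injective hd h4
  exact ⟨hmn, by rw [h2, hmn]⟩
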